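/- In a minimum counterexample G (with respect to number of edges) to the statement 'every graph satisfying Property A is acyclically edge colorable with Δ + 3 colors', the set Q of vertices of degree 2 is an independent set. -/

import Mathlib

open SimpleGraph

/-- Property A: every induced subgraph `H` satisfies `|E(H)| ≤ 2|V(H)| - 1`. -/
def PropertyA {V : Type*} (G : SimpleGraph V) : Prop :=
  ∀ s : Set V, (G.induce s).edgeSet.ncard ≤ 2 * s.ncard - 1

/-- `H` is a minor of `G`: branch sets are disjoint, connected, and adjacency is represented. -/
def IsMinor {W V : Type*} (H : SimpleGraph W) (G : SimpleGraph V) : Prop :=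
  ∃ f : W → Set V,
    (∀ w, (G.induce (f w)).Connected) ∧
    (∀ w₁ w₂, w₁ ≠ w₂ → Disjoint (f w₁) (f w₂)) ∧
    (∀ w₁ w₂, H.Adj w₁ w₂ → ∃ a ∈ f w₁, ∃ b ∈ f w₂, G.Adj a b)

/-- Planarity via Wagner's theorem: no `K₅` minor and no `K₃,₃` minor. -/
def IsPlanar {V : Type*} (G : SimpleGraph V) : Prop :=
  ¬ IsMinor (completeGraph (Fin 5)) G ∧
  ¬ IsMinor (completeBipartiteGraph (Fin 3) (Fin 3)) G

/-- A proper edge coloring: distinct edges sharing a vertex get distinct colors. -/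
def IsProperEdgeColoring {V β : Type*} (G : SimpleGraph V) (c : Sym2 V → β) : Prop :=
  ∀ e ∈ G.edgeSet, ∀ f ∈ G.edgeSet, e ≠ f → (∃ v, v ∈ e ∧ v ∈ f) → c e ≠ c f

/-- An acyclic edge coloring: proper and no cycle uses only two colors. -/
def IsAcyclicEdgeColoring {V β : Type*} (G : SimpleGraph V) (c : Sym2 V → β) : Prop :=
  IsProperEdgeColoring G c ∧
    ∀ (γ δ : β) (v : V) (p : G.Walk v v), p.IsCycle →
      ¬ ∀ e ∈ p.edges, c e = γ ∨ c e = δ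

/-- `G` admits an acyclic edge coloring with at most `k` colors. -/
def AcyclicallyEdgeColorable {V : Type*} (G : SimpleGraph V) (k : ℕ) : Prop :=
  ∃ c : Sym2 V → Fin k, IsAcyclicEdgeColoring G c

/-- A proper partial edge coloring (uncolored edges get `none`). -/
def IsProperPartialEdgeColoring {V : Type*} (G : SimpleGraph V) (c : Sym2 V → Option ℕ) : Prop :=
  ∀ e ∈ G.edgeSet, ∀ f ∈ G.edgeSet, e ≠ f → (∃ v, v ∈ e ∧ v ∈ f) →
    ∀ γ : ℕ, c e = some γ → c f ≠ some γ

/-- There is a cycle all of whose edges are colored with one of two colors. -/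
def HasBichromaticCycle {V : Type*} (G : SimpleGraph V) (c : Sym2 V → Option ℕ) : Prop :=
  ∃ (γ δ : ℕ) (v : V) (p : G.Walk v v), p.IsCycle ∧
    ∀ e ∈ p.edges, c e = some γ ∨ c e = some δ

/-- A valid (acyclic proper) partial edge coloring. -/
def IsAcyclicPartialEdgeColoring {V : Type*} (G : SimpleGraph V) (c : Sym2 V → Option ℕ) : Prop :=
  IsProperPartialEdgeColoring G c ∧ ¬ HasBichromaticCycle G c

/-- `F_a`: the set of colors appearing on edges incident to `a`. -/
def colorsAt {V : Type*} (G : SimpleGraph V) (c : Sym2 V → Option ℕ) (a : V) : Set ℕ :=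
  {γ | ∃ z, G.Adj a z ∧ c s(a, z) = some γ}

/-- `S_{ab} = F_b \ {c(a,b)}`. -/
def Sset {V : Type*} (G : SimpleGraph V) (c : Sym2 V → Option ℕ) (a b : V) : Set ℕ :=
  colorsAt G c b \ {γ | c s(a, b) = some γ}

/-- A maximal `(γ,δ)`-bichromatic path: a path all of whose edges are colored `γ` or `δ`,
which cannot be extended at either end by a `γ`- or `δ`-colored edge. -/
def IsMaxBichromaticPath {V : Type*} (G : SimpleGraph V) (c : Sym2 V → Option ℕ)
    (γ δ : ℕ) {x y : V} (p : G.Walk x y) : Prop :=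
  p.IsPath ∧ (∀ e ∈ p.edges, c e = some γ ∨ c e = some δ) ∧
    ∀ e ∈ G.edgeSet, (x ∈ e ∨ y ∈ e) → (c e = some γ ∨ c e = some δ) → e ∈ p.edges

/-- A `(γ,δ,ab)`-critical path: a maximal `(γ,δ)`-bichromatic path from `a` to `b`
whose first and last edges are colored `γ`. -/
def IsCriticalPath {V : Type*} (G : SimpleGraph V) (c : Sym2 V → Option ℕ)
    (γ δ : ℕ) (a b : V) (p : G.Walk a b) : Prop :=
  IsMaxBichromaticPath G c γ δ p ∧
    (∃ e, p.edges.head? = some e ∧ c e = some γ) ∧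
    (∃ e, p.edges.getLast? = some e ∧ c e = some γ)


lemma list_head_ne_getLast {α : Type*} {l : List α} (h : l.Nodup) (h2 : 2 ≤ l.length)
    (hne : l ≠ []) : l.head hne ≠ l.getLast hne := by
  cases l with
  | nil => simp at h2
  | cons a t =>
    have ht : t ≠ [] := by rintro rfl; simp at h2
    rw [List.head_cons, List.getLast_cons ht]
    intro heq
    exact (List.nodup_cons.mp h).1 (heq ▸ List.getLast_mem ht)

lemma cycle_two_edges_start {V : Type*} {G : SimpleGraph V} {z : V}
    (q : G.Walk z z) (hq : q.IsCycle) :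
    ∃ e₁ e₂, e₁ ∈ q.edges ∧ e₂ ∈ q.edges ∧ e₁ ≠ e₂ ∧ z ∈ e₁ ∧ z ∈ e₂ := by
  have hlen : 3 ≤ q.length := hq.three_le_length
  have hd : q.darts ≠ [] := by
    intro h; rw [← Walk.length_darts, h] at hlen; simp at hlen
  have he : q.edges ≠ [] := by
    intro h; rw [← Walk.length_edges, h] at hlen; simp at hlen
  refine ⟨(q.darts.head hd).edge, (q.darts.getLast hd).edge, ?_, ?_, ?_, ?_, ?_⟩
  · exact List.mem_map_of_mem (List.head_mem hd)
  · exact List.mem_map_of_mem (List.getLast_mem hd)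
  · have h1 : (q.darts.head hd).edge = q.edges.head he :=
      (List.head_map (f := SimpleGraph.Dart.edge) (l := q.darts) he).symm
    have h2 : (q.darts.getLast hd).edge = q.edges.getLast he :=
      (List.getLast_map (f := SimpleGraph.Dart.edge) (l := q.darts) he).symm
    rw [h1, h2]
    exact list_head_ne_getLast hq.isCircuit.isTrail.edges_nodup
      (by rw [Walk.length_edges]; omega) he
  · have : (q.darts.head hd).fst = z := by rw [Walk.head_darts_eq_firstDart]; rfl
    rw [SimpleGraph.Dart.edge, Sym2.mem_iff]
    exact Or.inl this.symm
  · have : (q.darts.getLast hd).snd = z := by rw [Walk.getLast_darts_eq_lastDart]; rfl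
    rw [SimpleGraph.Dart.edge, Sym2.mem_iff]
    exact Or.inr this.symm

lemma cycle_two_edges_at {V : Type*} [DecidableEq V] {G : SimpleGraph V} {r z : V}
    (p : G.Walk r r) (hp : p.IsCycle) (hz : z ∈ p.support) :
    ∃ e₁ e₂, e₁ ∈ p.edges ∧ e₂ ∈ p.edges ∧ e₁ ≠ e₂ ∧ z ∈ e₁ ∧ z ∈ e₂ := by
  obtain ⟨e₁, e₂, h1, h2, h12, hz1, hz2⟩ := cycle_two_edges_start (p.rotate _ hz) (hp.rotate hz)
  exact ⟨e₁, e₂, (p.rotate_edges _ hz).mem_iff.mp h1, (p.rotate_edges _ hz).mem_iff.mp h2,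
    h12, hz1, hz2⟩

/-- recolor one edge -/
def recol {V α : Type*} [DecidableEq V] (c : Sym2 V → α) (e₀ : Sym2 V) (β : α) :
    Sym2 V → α := fun e => if e = e₀ then β else c e

@[simp] lemma recol_same {V α : Type*} [DecidableEq V] (c : Sym2 V → α) (e₀ : Sym2 V) (β : α) :
    recol c e₀ β e₀ = β := by simp [recol]

lemma recol_other {V α : Type*} [DecidableEq V] (c : Sym2 V → α) (e₀ : Sym2 V) (β : α)
    {e : Sym2 V} (h : e ≠ e₀) : recol c e₀ β e = c e := by simp [recol, h]


theorem min_counterexample_degree_two_independent {V : Type*} [Fintype V] [DecidableEq V]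
    (G : SimpleGraph V) [DecidableRel G.Adj]
    (hA : PropertyA G)
    (hcex : ¬ AcyclicallyEdgeColorable G (G.maxDegree + 3))
    (hmin : ∀ H : SimpleGraph V, H ≤ G → H ≠ G →
      AcyclicallyEdgeColorable H (G.maxDegree + 3)) :
    ∀ x y : V, G.degree x = 2 → G.degree y = 2 → ¬ G.Adj x y := by
  classical
  intro x y hdx hdy hxy
  have hxy' : x ≠ y := hxy.ne
  -- the other neighbor u of x
  have hyn : y ∈ G.neighborFinset x := by simp [hxy]
  have hcardx : ((G.neighborFinset x).erase y).card = 1 := by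
    rw [Finset.card_erase_of_mem hyn, card_neighborFinset_eq_degree, hdx]
  obtain ⟨u, hu⟩ := Finset.card_pos.mp (hcardx ▸ Nat.one_pos)
  have hu_ne : u ≠ y := Finset.ne_of_mem_erase hu
  have hxu : G.Adj x u := by
    have := Finset.mem_of_mem_erase hu; simpa using this
  -- the other neighbor v of y
  have hxn : x ∈ G.neighborFinset y := by simp [hxy.symm]
  have hcardy : ((G.neighborFinset y).erase x).card = 1 := by
    rw [Finset.card_erase_of_mem hxn, card_neighborFinset_eq_degree, hdy]
  obtain ⟨v, hv⟩ := Finset.card_pos.mp (hcardy ▸ Nat.one_pos)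
  have hv_ne_x : v ≠ x := Finset.ne_of_mem_erase hv
  have hyv : G.Adj y v := by
    have := Finset.mem_of_mem_erase hv; simpa using this
  have hv_ne_y : v ≠ y := hyv.ne'
  -- neighbor characterizations
  have hnx : ∀ z, G.Adj x z → z = y ∨ z = u := by
    intro z hz
    have hsub : ({y, u} : Finset V) ⊆ G.neighborFinset x := by
      intro w hw
      rcases Finset.mem_insert.mp hw with rfl | hw
      · simpa using hxy
      · rw [Finset.mem_singleton] at hw; subst hw; simpa using hxu
    have hcard2 : ({y, u} : Finset V).card = 2 := by
      rw [Finset.card_insert_of_notMem (by simpa using hu_ne.symm), Finset.card_singleton]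
    have heq : G.neighborFinset x = {y, u} :=
      (Finset.eq_of_subset_of_card_le hsub
        (by rw [hcard2, card_neighborFinset_eq_degree, hdx])).symm
    have hzmem : z ∈ G.neighborFinset x := by simpa using hz
    rw [heq] at hzmem
    simpa using hzmem
  have hny : ∀ z, G.Adj y z → z = x ∨ z = v := by
    intro z hz
    have hsub : ({x, v} : Finset V) ⊆ G.neighborFinset y := by
      intro w hw
      rcases Finset.mem_insert.mp hw with rfl | hw
      · simpa using hxy.symm
      · rw [Finset.mem_singleton] at hw; subst hw; simpa using hyv
    have hcard2 : ({x, v} : Finset V).card = 2 := by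
      rw [Finset.card_insert_of_notMem (by simpa using hv_ne_x.symm), Finset.card_singleton]
    have heq : G.neighborFinset y = {x, v} :=
      (Finset.eq_of_subset_of_card_le hsub
        (by rw [hcard2, card_neighborFinset_eq_degree, hdy])).symm
    have hzmem : z ∈ G.neighborFinset y := by simpa using hz
    rw [heq] at hzmem
    simpa using hzmem
  -- the subgraph H
  set H : SimpleGraph V := G.deleteEdges {s(x, y)} with hH
  have hHle : H ≤ G := G.deleteEdges_le _
  have hHne : H ≠ G := by
    intro h
    have hadj : H.Adj x y := by rw [h]; exact hxy
    rw [hH, SimpleGraph.deleteEdges_adj] at hadj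
    exact hadj.2 rfl
  obtain ⟨c, hcp, hca⟩ := hmin H hHle hHne
  have hxyE : s(x, y) ∈ G.edgeSet := hxy
  have hxuE : s(x, u) ∈ G.edgeSet := hxu
  have hyvE : s(y, v) ∈ G.edgeSet := hyv
  have hmemH : ∀ e ∈ G.edgeSet, e ≠ s(x, y) → e ∈ H.edgeSet := by
    intro e he hne
    rw [hH, SimpleGraph.edgeSet_deleteEdges]
    exact ⟨he, by simpa using hne⟩
  have hxu_ne : s(x, u) ≠ s(x, y) := by
    intro h
    rcases Sym2.eq_iff.mp h with ⟨_, h2⟩ | ⟨h1, _⟩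
    · exact hu_ne h2
    · exact hxy' h1
  have hyv_ne : s(y, v) ≠ s(x, y) := by
    intro h
    rcases Sym2.eq_iff.mp h with ⟨h1, _⟩ | ⟨_, h2⟩
    · exact hxy' h1.symm
    · exact hv_ne_x h2
  -- edges at a vertex
  have hedge_at : ∀ (w : V) (e : Sym2 V), e ∈ G.edgeSet → w ∈ e →
      ∃ z, G.Adj w z ∧ e = s(w, z) := by
    intro w e he hw
    induction e with
    | _ a b =>
      rcases Sym2.mem_iff.mp hw with rfl | rfl
      · exact ⟨b, he, rfl⟩
      · exact ⟨a, ((SimpleGraph.mem_edgeSet G).mp he).symm, Sym2.eq_swap⟩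
  have hatx : ∀ e ∈ G.edgeSet, x ∈ e → e = s(x, y) ∨ e = s(x, u) := by
    intro e he hx
    obtain ⟨z, hz, rfl⟩ := hedge_at x e he hx
    rcases hnx z hz with rfl | rfl
    · exact Or.inl rfl
    · exact Or.inr rfl
  have haty : ∀ e ∈ G.edgeSet, y ∈ e → e = s(x, y) ∨ e = s(y, v) := by
    intro e he hy
    obtain ⟨z, hz, rfl⟩ := hedge_at y e he hy
    rcases hny z hz with rfl | rfl
    · exact Or.inl Sym2.eq_swap
    · exact Or.inr rfl
  -- properness of the recoloring
  have hproper : ∀ β : Fin (G.maxDegree + 3), β ≠ c s(x, u) → β ≠ c s(y, v) →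
      IsProperEdgeColoring G (recol c s(x, y) β) := by
    intro β hβ1 hβ2 e he f hf hef hshare
    obtain ⟨z, hze, hzf⟩ := hshare
    by_cases h1 : e = s(x, y) <;> by_cases h2 : f = s(x, y)
    · exact absurd (h1.trans h2.symm) hef
    · subst h1
      rw [recol_same, recol_other c _ _ h2]
      rcases Sym2.mem_iff.mp hze with rfl | rfl
      · rcases hatx f hf hzf with h | h
        · exact absurd h h2
        · rw [h]; exact hβ1
      · rcases haty f hf hzf with h | h
        · exact absurd h h2
        · rw [h]; exact hβ2
    · subst h2
      rw [recol_same, recol_other c _ _ h1]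
      rcases Sym2.mem_iff.mp hzf with rfl | rfl
      · rcases hatx e he hze with h | h
        · exact absurd h h1
        · rw [h]; exact hβ1.symm
      · rcases haty e he hze with h | h
        · exact absurd h h1
        · rw [h]; exact hβ2.symm
    · rw [recol_other c _ _ h1, recol_other c _ _ h2]
      exact hcp e (hmemH e he h1) f (hmemH f hf h2) hef ⟨z, hze, hzf⟩
  -- the key claim
  have hclaim : ∀ β : Fin (G.maxDegree + 3), β ≠ c s(x, u) → β ≠ c s(y, v) →
      ¬ IsAcyclicEdgeColoring G (recol c s(x, y) β) →
      ∃ w, G.Adj v w ∧ w ≠ y ∧ c s(v, w) = β := by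
    intro β hβ1 hβ2 hnot
    have hprop := hproper β hβ1 hβ2
    have hB : ¬ ∀ (γ δ : Fin (G.maxDegree + 3)) (r : V) (p : G.Walk r r), p.IsCycle →
        ¬ ∀ e ∈ p.edges, recol c s(x, y) β e = γ ∨ recol c s(x, y) β e = δ :=
      fun hB => hnot ⟨hprop, hB⟩
    push_neg at hB
    obtain ⟨γ, δ, r, p, hpc, hbi⟩ := hB
    -- the cycle must use the edge xy
    have hxy_in : s(x, y) ∈ p.edges := by
      by_contra hxy_nin
      have hpe : ∀ e ∈ p.edges, e ∉ ({s(x, y)} : Set (Sym2 V)) := by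
        intro e hep hmem
        rw [Set.mem_singleton_iff] at hmem
        exact hxy_nin (hmem ▸ hep)
      have hE : (p.toDeleteEdges {s(x, y)} hpe).edges = p.edges :=
        Walk.edges_transfer _ _
      refine hca γ δ r (p.toDeleteEdges {s(x, y)} hpe)
        (Walk.IsCycle.toDeleteEdges G _ hpc hpe) ?_
      intro e hep
      rw [hE] at hep
      have hne : e ≠ s(x, y) := fun h => hxy_nin (h ▸ hep)
      have := hbi e hep
      rwa [recol_other c _ _ hne] at this
    -- colors on the cycle
    have hβγδ : (β : Fin (G.maxDegree + 3)) = γ ∨ β = δ := by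
      have := hbi _ hxy_in
      rwa [recol_same] at this
    have hxs : x ∈ p.support := p.fst_mem_support_of_mem_edges hxy_in
    obtain ⟨e₁, e₂, he₁, he₂, h12, hx1, hx2⟩ := cycle_two_edges_at p hpc hxs
    have hxu_in : s(x, u) ∈ p.edges := by
      rcases hatx e₁ (p.edges_subset_edgeSet he₁) hx1 with h | h <;>
        rcases hatx e₂ (p.edges_subset_edgeSet he₂) hx2 with h' | h'
      · exact absurd (h.trans h'.symm) h12
      · exact h' ▸ he₂
      · exact h ▸ he₁
      · exact h ▸ he₁
    have hαγδ : c s(x, u) = γ ∨ c s(x, u) = δ := by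
      have := hbi _ hxu_in
      rwa [recol_other c _ _ hxu_ne] at this
    have hys : y ∈ p.support := p.snd_mem_support_of_mem_edges hxy_in
    obtain ⟨g₁, g₂, hg₁, hg₂, hg12, hy1, hy2⟩ := cycle_two_edges_at p hpc hys
    have hyv_in : s(y, v) ∈ p.edges := by
      rcases haty g₁ (p.edges_subset_edgeSet hg₁) hy1 with h | h <;>
        rcases haty g₂ (p.edges_subset_edgeSet hg₂) hy2 with h' | h'
      · exact absurd (h.trans h'.symm) hg12
      · exact h' ▸ hg₂
      · exact h ▸ hg₁
      · exact h ▸ hg₁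
    have hcyv : c s(y, v) = γ ∨ c s(y, v) = δ := by
      have := hbi _ hyv_in
      rwa [recol_other c _ _ hyv_ne] at this
    -- the second cycle edge at v
    have hvs : v ∈ p.support := p.snd_mem_support_of_mem_edges hyv_in
    obtain ⟨f₁, f₂, hf₁, hf₂, hf12, hv1, hv2⟩ := cycle_two_edges_at p hpc hvs
    obtain ⟨ev, hev_in, hev_ne, hv_ev⟩ :
        ∃ ev, ev ∈ p.edges ∧ ev ≠ s(y, v) ∧ v ∈ ev := by
      by_cases h : f₁ = s(y, v)
      · exact ⟨f₂, hf₂, fun hh => hf12 (h.trans hh.symm), hv2⟩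
      · exact ⟨f₁, hf₁, h, hv1⟩
    have hev_nxy : ev ≠ s(x, y) := by
      intro h
      rw [h, Sym2.mem_iff] at hv_ev
      rcases hv_ev with h' | h'
      · exact hv_ne_x h'
      · exact hv_ne_y h'
    have hev_c : c ev = γ ∨ c ev = δ := by
      have := hbi _ hev_in
      rwa [recol_other c _ _ hev_nxy] at this
    have hne_col : c ev ≠ c s(y, v) :=
      hcp ev (hmemH _ (p.edges_subset_edgeSet hev_in) hev_nxy)
        (s(y, v)) (hmemH _ hyvE hyv_ne) hev_ne
        ⟨v, hv_ev, by rw [Sym2.mem_iff]; exact Or.inr rfl⟩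
    -- color algebra
    have hcevβ : c ev = β := by
      rcases hβγδ with rfl | rfl
      · have hyv' : c s(y, v) = δ := by
          rcases hcyv with h | h
          · exact absurd h.symm hβ2
          · exact h
        rcases hev_c with h | h
        · exact h
        · exact absurd (h.trans hyv'.symm) hne_col
      · have hyv' : c s(y, v) = γ := by
          rcases hcyv with h | h
          · exact h
          · exact absurd h.symm hβ2
        rcases hev_c with h | h
        · exact absurd (h.trans hyv'.symm) hne_col
        · exact h
    obtain ⟨w, hvw, hevw⟩ := hedge_at v ev (p.edges_subset_edgeSet hev_in) hv_ev
    refine ⟨w, hvw, ?_, ?_⟩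
    · intro hwy
      subst hwy
      exact hev_ne (hevw.trans Sym2.eq_swap)
    · rw [← hevw]; exact hcevβ
  -- main case split
  by_cases hex : ∃ β : Fin (G.maxDegree + 3), β ≠ c s(x, u) ∧ β ≠ c s(y, v) ∧
      IsAcyclicEdgeColoring G (recol c s(x, y) β)
  · obtain ⟨β, _, _, hac⟩ := hex
    exact hcex ⟨recol c s(x, y) β, hac⟩
  · push_neg at hex
    have hbad : ∀ β : Fin (G.maxDegree + 3), β ≠ c s(x, u) → β ≠ c s(y, v) →
        ∃ w, G.Adj v w ∧ w ≠ y ∧ c s(v, w) = β :=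
      fun β h1 h2 => hclaim β h1 h2 (hex β h1 h2)
    set S : Finset (Fin (G.maxDegree + 3)) :=
      Finset.univ.filter (fun β => β ≠ c s(x, u) ∧ β ≠ c s(y, v)) with hS
    set T : Finset V := (G.neighborFinset v).erase y with hT
    have hmap : ∀ β ∈ S, ∃ w ∈ T, c s(v, w) = β := by
      intro β hβ
      rw [hS, Finset.mem_filter] at hβ
      obtain ⟨w, hvw, hwy, hcw⟩ := hbad β hβ.2.1 hβ.2.2
      exact ⟨w, by rw [hT]; exact Finset.mem_erase.mpr ⟨hwy, by simpa using hvw⟩, hcw⟩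
    choose fw hfT hfc using hmap
    -- pigeonhole
    have hST : S.card ≤ T.card := by
      by_contra hlt
      push_neg at hlt
      have hmaps : ∀ β ∈ S, (fun β => if h : β ∈ S then fw β h else v) β ∈ T := by
        intro β hβ; simp only [dif_pos hβ]; exact hfT β hβ
      obtain ⟨β₁, hβ₁, β₂, hβ₂, hne, heq⟩ :=
        Finset.exists_ne_map_eq_of_card_lt_of_maps_to hlt hmaps
      simp only [dif_pos hβ₁, dif_pos hβ₂] at heq
      apply hne
      rw [← hfc β₁ hβ₁, ← hfc β₂ hβ₂, heq]
    have hScard : G.maxDegree + 3 ≤ S.card + 2 := by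
      have hsub : (Finset.univ : Finset (Fin (G.maxDegree + 3))) ⊆
          S ∪ {c s(x, u), c s(y, v)} := by
        intro β _
        by_cases h1 : β = c s(x, u)
        · exact Finset.mem_union_right _ (by simp [h1])
        by_cases h2 : β = c s(y, v)
        · exact Finset.mem_union_right _ (by simp [h2])
        · exact Finset.mem_union_left _ (by rw [hS]; simp [h1, h2])
      have h1 := Finset.card_le_card hsub
      have h2 := Finset.card_union_le S ({c s(x, u), c s(y, v)} : Finset (Fin (G.maxDegree + 3)))
      have h3 : ({c s(x, u), c s(y, v)} : Finset (Fin (G.maxDegree + 3))).card ≤ 2 :=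
        Finset.card_insert_le _ _ |>.trans (by simp)
      have h4 : (Finset.univ : Finset (Fin (G.maxDegree + 3))).card = G.maxDegree + 3 := by
        simp
      omega
    have hTcard : T.card = G.degree v - 1 := by
      rw [hT, Finset.card_erase_of_mem (by simpa using hyv.symm), card_neighborFinset_eq_degree]
    have hdv : G.degree v ≤ G.maxDegree := G.degree_le_maxDegree v
    omega
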